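/- Fix a field k and integers s, p with s ≥ 1. Let ψ : E → E'' be a morphism of homologically graded spectral sequences of k-vector spaces starting at page s, such that ψ^s_{m,q} : E^s_{m,q} → E''^s_{m,q} is an isomorphism for all m > p and all q, and E''^s_{m,q} = 0 for all m ≤ p and all q. For an integer i ≥ s and a bidegree (m,q) with m > p, let Coim(d^i_c)_{m,q} denote the quotient space E^i_{m,q} / ker(d^i : E^i_{m,q} → E^i_{m−i, q+i−1}) if m − i ≤ p, and the zero space if m − i > p (i.e., the coimage in bidegree (m,q) of the restriction of the differential of E regarded as a map from filtration degrees > p to filtration degrees ≤ p). Then for every r ≥ s, every m > p and every q, the map ψ^r_{m,q} : E^r_{m,q} → E''^r_{m,q} is injective and there is an isomorphism of k-vector spaces E''^r_{m,q} ≅ E^r_{m,q} ⊕ (⊕_{s ≤ i < r} Coim(d^i_c)_{m,q}) under which ψ^r_{m,q} corresponds to the inclusion of the first summand. -/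

import Mathlib

universe u

/-- A homologically graded spectral sequence of `k`-vector spaces starting at page `s`:
`k`-vector spaces `E^r_{m,q}` for `r ≥ s` (here given for all `r ∈ ℤ`; only the pages
`r ≥ s` are constrained), differentials `d^r : E^r_{m,q} → E^r_{m-r,q+r-1}` (formalized,
as for `HomologicalComplex`, as maps `E^r_{m,q} → E^r_{m',q'}` vanishing unless
`m' = m - r` and `q' = q + r - 1`) with `d^r ∘ d^r = 0`, and specified isomorphisms
`E^{r+1}_{m,q} ≅ ker(d^r : E^r_{m,q} → E^r_{m-r,q+r-1}) / im(d^r : E^r_{m+r,q-r+1} → E^r_{m,q})`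
for `r ≥ s`. -/
structure SpectralSequence (k : Type*) [Field k] (s : ℤ) where
  /-- the pages -/
  E : ℤ → ℤ → ℤ → Type u
  [acg : ∀ r m q : ℤ, AddCommGroup (E r m q)]
  [mod : ∀ r m q : ℤ, Module k (E r m q)]
  /-- the differentials -/
  d : ∀ r m q m' q' : ℤ, E r m q →ₗ[k] E r m' q'
  d_shape : ∀ r m q m' q' : ℤ, ¬(m' = m - r ∧ q' = q + r - 1) → d r m q m' q' = 0
  d_comp_d : ∀ r m q m' q' m'' q'' : ℤ, (d r m' q' m'' q'').comp (d r m q m' q') = 0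
  /-- the specified isomorphisms of each page `r + 1` (for `r ≥ s`) with the homology
  of page `r` -/
  iso : ∀ (r m q : ℤ), s ≤ r →
    E (r + 1) m q ≃ₗ[k]
      (LinearMap.ker (d r m q (m - r) (q + r - 1)) ⧸
        Submodule.comap (LinearMap.ker (d r m q (m - r) (q + r - 1))).subtype
          (LinearMap.range (d r (m + r) (q - r + 1) m q)))

attribute [instance] SpectralSequence.acg SpectralSequence.mod

/-- A morphism of spectral sequences: `k`-linear maps on each page commuting with the
differentials and compatible, via the specified isomorphisms, with the maps induced on
homology. -/
structure SpectralSequenceHom {k : Type*} [Field k] {s : ℤ}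
    (E' E : SpectralSequence.{u} k s) where
  /-- the maps on each page -/
  φ : ∀ r m q : ℤ, E'.E r m q →ₗ[k] E.E r m q
  comm : ∀ r m q m' q' : ℤ,
    (E.d r m q m' q').comp (φ r m q) = (φ r m' q').comp (E'.d r m q m' q')
  compat : ∀ (r m q : ℤ) (h : s ≤ r)
    (x : LinearMap.ker (E'.d r m q (m - r) (q + r - 1))),
    (E.iso r m q h) (φ (r + 1) m q ((E'.iso r m q h).symm (Submodule.Quotient.mk x))) =
      Submodule.Quotient.mk
        ⟨φ r m q x.1, by
          have h1 := LinearMap.congr_fun (comm r m q (m - r) (q + r - 1)) x.1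
          simp only [LinearMap.coe_comp, Function.comp_apply] at h1
          have h2 : (E'.d r m q (m - r) (q + r - 1)) x.1 = 0 := x.2
          rw [LinearMap.mem_ker, h1, h2, map_zero]⟩

/-- `Coim(d^i_c)_{m,q}`: the coimage in bidegree `(m,q)` of the restriction of the
differential `d^i` of `E` regarded as a map from filtration degrees `> p` to filtration
degrees `≤ p`, i.e. `E^i_{m,q} / ker(d^i : E^i_{m,q} → E^i_{m-i,q+i-1})` if `m - i ≤ p`
and the zero space otherwise. -/
abbrev coimDc {k : Type*} [Field k] {s : ℤ} (E : SpectralSequence.{u} k s) (p : ℤ)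
    (i m q : ℤ) : Type u :=
  E.E i m q ⧸
    (if m - i ≤ p then LinearMap.ker (E.d i m q (m - i) (q + i - 1))
     else (⊤ : Submodule k (E.E i m q)))


section Helpers

variable {k : Type*} [Field k] {V V'' W : Type*}
  [AddCommGroup V] [Module k V] [AddCommGroup V''] [Module k V'']
  [AddCommGroup W] [Module k W]

/-- For a bijective map into a product with subsingleton second factor. -/
theorem helper_L3 (f : V →ₗ[k] V'') (hf : Function.Bijective f) [Subsingleton W] :
    ∃ e : V'' ≃ₗ[k] V × W, ∀ x, e (f x) = (x, 0) := by
  set ρ : V × W →ₗ[k] V'' := f.comp (LinearMap.fst k V W) with hρdef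
  have hρ : Function.Bijective ρ := by
    constructor
    · intro a b hab
      exact Prod.ext (hf.1 hab) (Subsingleton.elim _ _)
    · intro y
      obtain ⟨x, hx⟩ := hf.2 y
      exact ⟨(x, 0), hx⟩
  refine ⟨(LinearEquiv.ofBijective ρ hρ).symm, fun x => ?_⟩
  rw [LinearEquiv.symm_apply_eq]
  rfl

/-- Injective map with identified cokernel gives a product decomposition. -/
theorem helper_L1 (f : V →ₗ[k] V'') (hf : Function.Injective f)
    (g : (V'' ⧸ LinearMap.range f) ≃ₗ[k] W) :
    ∃ e : V'' ≃ₗ[k] V × W, ∀ x, e (f x) = (x, 0) := by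
  obtain ⟨σ, hσ⟩ := (LinearMap.range f).mkQ.exists_rightInverse_of_surjective
      (Submodule.range_mkQ _)
  set ρ : V × (V'' ⧸ LinearMap.range f) →ₗ[k] V'' :=
    f.comp (LinearMap.fst k V _) + σ.comp (LinearMap.snd k V _) with hρdef
  have hρapp : ∀ (x : V) (w : V'' ⧸ LinearMap.range f), ρ (x, w) = f x + σ w :=
    fun _ _ => rfl
  have hmkσ : ∀ w, (LinearMap.range f).mkQ (σ w) = w := fun w => by
    have := LinearMap.congr_fun hσ w
    simpa using this
  have hρ : Function.Bijective ρ := by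
    constructor
    · rw [injective_iff_map_eq_zero]
      rintro ⟨x, w⟩ hxw
      rw [hρapp] at hxw
      have h0 : (LinearMap.range f).mkQ (f x + σ w) = 0 := by rw [hxw, map_zero]
      rw [map_add, hmkσ] at h0
      have hfx : (LinearMap.range f).mkQ (f x) = 0 := by
        rw [Submodule.mkQ_apply, Submodule.Quotient.mk_eq_zero]
        exact LinearMap.mem_range_self f x
      rw [hfx, zero_add] at h0
      subst h0
      rw [map_zero, add_zero] at hxw
      have hx0 : x = 0 := hf (by rw [hxw, map_zero])
      simp [hx0]
    · intro y
      have hmem : y - σ ((LinearMap.range f).mkQ y) ∈ LinearMap.range f := by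
        rw [← Submodule.Quotient.mk_eq_zero, ← Submodule.mkQ_apply, map_sub, hmkσ, sub_self]
      obtain ⟨x, hx⟩ := hmem
      refine ⟨(x, (LinearMap.range f).mkQ y), ?_⟩
      rw [hρapp, hx]
      abel
  refine ⟨(LinearEquiv.ofBijective ρ hρ).symm.trans ((LinearEquiv.refl k V).prodCongr g),
    fun x => ?_⟩
  have h1 : (LinearEquiv.ofBijective ρ hρ).symm (f x) = (x, 0) := by
    rw [LinearEquiv.symm_apply_eq, LinearEquiv.ofBijective_apply, hρapp, map_zero, add_zero]
  rw [LinearEquiv.trans_apply, h1]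
  simp

/-- Cokernel is invariant under conjugating by equivalences. -/
theorem helper_cokerCongr {M1 N1 M2 N2 : Type*}
    [AddCommGroup M1] [Module k M1] [AddCommGroup N1] [Module k N1]
    [AddCommGroup M2] [Module k M2] [AddCommGroup N2] [Module k N2]
    (f1 : M1 →ₗ[k] N1) (f2 : M2 →ₗ[k] N2) (eM : M1 ≃ₗ[k] M2) (eN : N1 ≃ₗ[k] N2)
    (h : ∀ x, eN (f1 x) = f2 (eM x)) :
    Nonempty ((N1 ⧸ LinearMap.range f1) ≃ₗ[k] (N2 ⧸ LinearMap.range f2)) := by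
  refine ⟨Submodule.Quotient.equiv _ _ eN ?_⟩
  ext y
  simp only [Submodule.mem_map, LinearMap.mem_range]
  constructor
  · rintro ⟨y1, ⟨x, rfl⟩, rfl⟩
    exact ⟨eM x, (h x).symm⟩
  · rintro ⟨x2, rfl⟩
    exact ⟨f1 (eM.symm x2), ⟨eM.symm x2, rfl⟩, (h _).trans (congrArg f2 (eM.apply_symm_apply x2))⟩

/-- `V''/f(K) ≃ (V/K) × (V''/range f)` for injective `f`. -/
theorem helper_L2 (f : V →ₗ[k] V'') (hf : Function.Injective f) (K : Submodule k V) :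
    Nonempty ((V'' ⧸ K.map f) ≃ₗ[k] ((V ⧸ K) × (V'' ⧸ LinearMap.range f))) := by
  set P := K.map f with hP
  have hKle : K ≤ P.comap f := fun x hx => Submodule.mem_map_of_mem hx
  set fbar : (V ⧸ K) →ₗ[k] (V'' ⧸ P) := Submodule.mapQ K P f hKle with hfbar
  have hfbar_inj : Function.Injective fbar := by
    rw [injective_iff_map_eq_zero]
    intro a ha
    obtain ⟨x, rfl⟩ := Submodule.Quotient.mk_surjective K a
    rw [hfbar, Submodule.mapQ_apply, Submodule.Quotient.mk_eq_zero] at ha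
    obtain ⟨y, hy, hyx⟩ := ha
    rw [Submodule.Quotient.mk_eq_zero]
    rwa [← hf hyx]
  have hPle : P ≤ LinearMap.range f := by
    rintro _ ⟨x, _, rfl⟩
    exact LinearMap.mem_range_self f x
  have hrange : LinearMap.range fbar = (LinearMap.range f).map P.mkQ := by
    calc LinearMap.range fbar = LinearMap.range (fbar.comp K.mkQ) :=
          (LinearMap.range_comp_of_range_eq_top _ (Submodule.range_mkQ _)).symm
      _ = LinearMap.range (P.mkQ.comp f) := by rw [hfbar, Submodule.mapQ_mkQ]
      _ = (LinearMap.range f).map P.mkQ := LinearMap.range_comp _ _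
  have g : ((V'' ⧸ P) ⧸ LinearMap.range fbar) ≃ₗ[k] (V'' ⧸ LinearMap.range f) :=
    (Submodule.quotEquivOfEq _ _ hrange).trans
      (Submodule.quotientQuotientEquivQuotient P (LinearMap.range f) hPle)
  obtain ⟨e, -⟩ := helper_L1 fbar hfbar_inj g
  exact ⟨e⟩

/-- Extending a dependent product over `Ico s r` by the factor at `r`. -/
theorem helper_piIcoSucc (W : ℤ → Type u) [∀ i, AddCommGroup (W i)] [∀ i, Module k (W i)]
    (s r : ℤ) (hsr : s ≤ r) :
    Nonempty ((W r × ((i : (Finset.Ico s r : Finset ℤ)) → W i.1)) ≃ₗ[k]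
      ((i : (Finset.Ico s (r+1) : Finset ℤ)) → W i.1)) := by
  have hmem : ∀ i : (Finset.Ico s r : Finset ℤ), (i : ℤ) ∈ Finset.Ico s (r+1) := by
    intro i
    have h := Finset.mem_Ico.mp i.2
    exact Finset.mem_Ico.mpr ⟨h.1, by omega⟩
  have hr' : r ∈ Finset.Ico s (r+1) := Finset.mem_Ico.mpr ⟨hsr, by omega⟩
  set Φ : ((i : (Finset.Ico s (r+1) : Finset ℤ)) → W i.1) →ₗ[k]
      (W r × ((i : (Finset.Ico s r : Finset ℤ)) → W i.1)) :=
    { toFun := fun g => (g ⟨r, hr'⟩, fun i => g ⟨i.1, hmem i⟩)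
      map_add' := fun g h => rfl
      map_smul' := fun c g => rfl } with hΦdef
  have hΦ : Function.Bijective Φ := by
    constructor
    · intro g g' hgg'
      have h1 := congrArg Prod.fst hgg'
      have h2 := congrArg Prod.snd hgg'
      funext j
      by_cases hj : (j : ℤ) = r
      · have hjj : j = ⟨r, hr'⟩ := Subtype.ext hj
        rw [hjj]; exact h1
      · have hj2 : (j : ℤ) ∈ Finset.Ico s r := by
          have h := Finset.mem_Ico.mp j.2
          exact Finset.mem_Ico.mpr ⟨h.1, by omega⟩
        exact congrFun h2 ⟨j.1, hj2⟩
    · rintro ⟨w, g⟩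
      refine ⟨fun j => if hj : (j : ℤ) = r then hj.symm ▸ w
        else g ⟨j.1, by
          have h := Finset.mem_Ico.mp j.2
          exact Finset.mem_Ico.mpr ⟨h.1, by omega⟩⟩, ?_⟩
      refine Prod.ext ?_ ?_
      · show (if hj : (r : ℤ) = r then _ else _) = w
        rw [dif_pos rfl]
      · funext i
        have hi : (i : ℤ) ≠ r := by
          have h := Finset.mem_Ico.mp i.2
          omega
        show (if hj : (i : ℤ) = r then _ else _) = g i
        rw [dif_neg hi]
  exact ⟨(LinearEquiv.ofBijective Φ hΦ).symm⟩

end Helpers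

theorem spectral_sequence_comparison_above
    {k : Type*} [Field k] {s p : ℤ} (hs : 1 ≤ s)
    (E E'' : SpectralSequence.{u} k s) (ψ : SpectralSequenceHom E E'')
    (hiso : ∀ m q : ℤ, p < m → Function.Bijective (ψ.φ s m q))
    (hzero : ∀ m q : ℤ, m ≤ p → ∀ x : E''.E s m q, x = 0)
    (r : ℤ) (hr : s ≤ r) (m q : ℤ) (hm : p < m) :
    Function.Injective (ψ.φ r m q) ∧
    ∃ e : E''.E r m q ≃ₗ[k]
        (E.E r m q × ((i : (Finset.Ico s r : Finset ℤ)) → coimDc E p i.1 m q)),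
      ∀ x : E.E r m q, e (ψ.φ r m q x) = (x, 0) := by
  -- vanishing of E'' in filtration degrees ≤ p on all pages
  have Z : ∀ r', s ≤ r' → ∀ m' q' : ℤ, m' ≤ p → Subsingleton (E''.E r' m' q') := by
    intro r'
    refine Int.le_induction
      (motive := fun r' _ => ∀ m' q' : ℤ, m' ≤ p → Subsingleton (E''.E r' m' q')) ?_ ?_ r'
    · intro m' q' hm'
      exact ⟨fun a b => by rw [hzero m' q' hm' a, hzero m' q' hm' b]⟩
    · intro r' hr' IH m' q' hm'
      haveI := IH m' q' hm'
      haveI : Subsingleton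
          (↥(LinearMap.ker (E''.d r' m' q' (m' - r') (q' + r' - 1))) ⧸
            Submodule.comap (LinearMap.ker (E''.d r' m' q' (m' - r') (q' + r' - 1))).subtype
              (LinearMap.range (E''.d r' (m' + r') (q' - r' + 1) m' q'))) := by
        constructor
        intro a b
        obtain ⟨x, rfl⟩ := Submodule.Quotient.mk_surjective _ a
        obtain ⟨y, rfl⟩ := Submodule.Quotient.mk_surjective _ b
        exact congrArg _ (Subtype.ext (Subsingleton.elim x.1 y.1))
      exact Equiv.subsingleton (E''.iso r' m' q' hr').toEquiv
  -- subsingleton coim factors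
  have coimSub : ∀ i m' q' : ℤ, ¬ (m' - i ≤ p) → Subsingleton (coimDc E p i m' q') := by
    intro i m' q' h
    exact Submodule.Quotient.subsingleton_iff.mpr (if_neg h)
  have main : ∀ r' : ℤ, s ≤ r' → ∀ m q : ℤ, p < m →
      (Function.Injective (ψ.φ r' m q) ∧
      ∃ e : E''.E r' m q ≃ₗ[k]
          (E.E r' m q × ((i : (Finset.Ico s r' : Finset ℤ)) → coimDc E p i.1 m q)),
        ∀ x : E.E r' m q, e (ψ.φ r' m q x) = (x, 0)) := by
   intro r'
   refine Int.le_induction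
      (motive := fun r' _ => ∀ m q : ℤ, p < m →
        (Function.Injective (ψ.φ r' m q) ∧
        ∃ e : E''.E r' m q ≃ₗ[k]
            (E.E r' m q × ((i : (Finset.Ico s r' : Finset ℤ)) → coimDc E p i.1 m q)),
          ∀ x : E.E r' m q, e (ψ.φ r' m q x) = (x, 0))) ?_ ?_ r'
   ·  intro m q hm
      refine ⟨(hiso m q hm).1, ?_⟩
      haveI : IsEmpty ((Finset.Ico s s : Finset ℤ)) :=
        Finset.isEmpty_coe_sort.mpr (Finset.Ico_self s)
      exact helper_L3 _ (hiso m q hm)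
   ·  intro r hr IH m q hm
      -- bijectivity on page r in high filtration degrees
      have hbij : ∀ m' q' : ℤ, p + r - 1 < m' → Function.Bijective (ψ.φ r m' q') := by
        intro m' q' hm'
        have hm'' : p < m' := by omega
        obtain ⟨hinj, e, he⟩ := IH m' q' hm''
        refine ⟨hinj, fun y => ?_⟩
        haveI : ∀ i : (Finset.Ico s r : Finset ℤ), Subsingleton (coimDc E p i.1 m' q') := by
          intro i
          have hi := Finset.mem_Ico.mp i.2
          exact coimSub i.1 m' q' (by omega)
        refine ⟨(e y).1, e.injective ?_⟩
        rw [he]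
        exact Prod.ext rfl (Subsingleton.elim _ _)
      have hfinj : Function.Injective (ψ.φ r m q) := (IH m q hm).1
      have hfin : Function.Bijective (ψ.φ r (m+r) (q-r+1)) := hbij (m+r) (q-r+1) (by omega)
      set f := ψ.φ r m q with hfdef
      set dout := E.d r m q (m-r) (q+r-1) with hdout
      set din := E.d r (m+r) (q-r+1) m q with hdin
      set dout'' := E''.d r m q (m-r) (q+r-1) with hdout''
      set din'' := E''.d r (m+r) (q-r+1) m q with hdin''
      set K : Submodule k (E.E r m q) := LinearMap.ker dout with hK
      set K'' : Submodule k (E''.E r m q) := LinearMap.ker dout'' with hK''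
      set Isub : Submodule k K := Submodule.comap K.subtype (LinearMap.range din) with hIsub
      set Isub'' : Submodule k K'' := Submodule.comap K''.subtype (LinearMap.range din'')
        with hIsub''
      have hcomm_out := ψ.comm r m q (m-r) (q+r-1)
      have hcomm_in := ψ.comm r (m+r) (q-r+1) m q
      have hcomm_out' : ∀ x, dout'' (f x) = ψ.φ r (m-r) (q+r-1) (dout x) := by
        intro x
        have := LinearMap.congr_fun hcomm_out x
        simpa using this
      have hcomm_in' : ∀ y, din'' (ψ.φ r (m+r) (q-r+1) y) = f (din y) := by
        intro y
        have := LinearMap.congr_fun hcomm_in y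
        simpa using this
      have hψK : ∀ x ∈ K, f x ∈ K'' := by
        intro x hx
        have hx0 : dout x = 0 := hx
        show dout'' (f x) = 0
        rw [hcomm_out', hx0, map_zero]
      set ψK : K →ₗ[k] K'' := f.restrict hψK with hψKdef
      have hψKval : ∀ x : K, (ψK x : E''.E r m q) = f x.1 := fun x => rfl
      have hle : Isub ≤ Isub''.comap ψK := by
        rintro ⟨x, hxK⟩ hx
        obtain ⟨y, hy⟩ := hx
        show (ψK ⟨x, hxK⟩ : E''.E r m q) ∈ LinearMap.range din''
        rw [hψKval]
        refine ⟨ψ.φ r (m+r) (q-r+1) y, ?_⟩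
        rw [hcomm_in', hy]
        rfl
      set φbar : (K ⧸ Isub) →ₗ[k] (K'' ⧸ Isub'') := Submodule.mapQ Isub Isub'' ψK hle
        with hφbardef
      -- key identity for ψ on page r+1
      have hkey : ∀ z : E.E (r+1) m q,
          ψ.φ (r+1) m q z = (E''.iso r m q hr).symm (φbar (E.iso r m q hr z)) := by
        intro z
        obtain ⟨x, hx⟩ := Submodule.Quotient.mk_surjective Isub (E.iso r m q hr z)
        have hz : z = (E.iso r m q hr).symm (Submodule.Quotient.mk x) := by
          rw [hx, LinearEquiv.symm_apply_apply]
        apply (E''.iso r m q hr).injective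
        rw [hz, ψ.compat r m q hr x, LinearEquiv.apply_symm_apply,
          LinearEquiv.apply_symm_apply, hφbardef, Submodule.mapQ_apply]
        rfl
      -- injectivity of φbar, hence of ψ on page r+1
      have hφbar_inj : Function.Injective φbar := by
        rw [injective_iff_map_eq_zero]
        intro a ha
        obtain ⟨x, rfl⟩ := Submodule.Quotient.mk_surjective Isub a
        rw [hφbardef, Submodule.mapQ_apply, Submodule.Quotient.mk_eq_zero] at ha
        rw [Submodule.Quotient.mk_eq_zero]
        obtain ⟨y'', hy''⟩ := ha
        obtain ⟨y, rfl⟩ := hfin.2 y''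
        have hy2 : f (din y) = f x.1 := (hcomm_in' y).symm.trans hy''
        show (x : E.E r m q) ∈ LinearMap.range din
        exact ⟨y, hfinj hy2⟩
      have hinj1 : Function.Injective (ψ.φ (r+1) m q) := by
        intro a b hab
        rw [hkey a, hkey b] at hab
        exact (E.iso r m q hr).injective
          (hφbar_inj ((E''.iso r m q hr).symm.injective hab))
      -- Isub'' ≤ range ψK
      have hIle : Isub'' ≤ LinearMap.range ψK := by
        rintro ⟨z, hzK⟩ hz
        obtain ⟨y'', hy''⟩ := hz
        obtain ⟨y, rfl⟩ := hfin.2 y''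
        have hdinK : din y ∈ K := by
          have := LinearMap.congr_fun (E.d_comp_d r (m+r) (q-r+1) m q (m-r) (q+r-1)) y
          simp at this; exact this
        refine ⟨⟨din y, hdinK⟩, Subtype.ext ?_⟩
        rw [hψKval]
        show f (din y) = z
        rw [← hcomm_in']
        exact hy''
      -- range of φbar
      have hrangeφbar : LinearMap.range φbar = (LinearMap.range ψK).map Isub''.mkQ := by
        calc LinearMap.range φbar = LinearMap.range (φbar.comp Isub.mkQ) :=
              (LinearMap.range_comp_of_range_eq_top _ (Submodule.range_mkQ _)).symm
          _ = LinearMap.range (Isub''.mkQ.comp ψK) := by rw [hφbardef, Submodule.mapQ_mkQ]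
          _ = (LinearMap.range ψK).map Isub''.mkQ := LinearMap.range_comp _ _
      -- cokernel of ψ on page r+1
      obtain ⟨ecoker⟩ : Nonempty ((E''.E (r+1) m q ⧸ LinearMap.range (ψ.φ (r+1) m q)) ≃ₗ[k]
          (K'' ⧸ LinearMap.range ψK)) := by
        obtain ⟨e1⟩ := helper_cokerCongr (ψ.φ (r+1) m q) φbar (E.iso r m q hr)
          (E''.iso r m q hr) (fun x => by rw [hkey, LinearEquiv.apply_symm_apply])
        exact ⟨e1.trans ((Submodule.quotEquivOfEq _ _ hrangeφbar).trans
          (Submodule.quotientQuotientEquivQuotient Isub'' (LinearMap.range ψK) hIle))⟩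
      by_cases hcase : m - r ≤ p
      · -- main case: the target of the outgoing differential is in low degree
        haveI := Z r hr (m-r) (q+r-1) hcase
        have hKtop : K'' = ⊤ := by
          rw [hK'', LinearMap.ker_eq_top]
          ext x
          exact Subsingleton.elim _ _
        have hmap : (LinearMap.range ψK).map (LinearEquiv.ofTop K'' hKtop : K'' →ₗ[k] E''.E r m q)
            = K.map f := by
          ext z
          simp only [Submodule.mem_map, LinearMap.mem_range]
          constructor
          · rintro ⟨w, ⟨x, rfl⟩, rfl⟩
            exact ⟨x.1, x.2, rfl⟩
          · rintro ⟨x, hx, rfl⟩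
            exact ⟨ψK ⟨x, hx⟩, ⟨⟨x, hx⟩, rfl⟩, rfl⟩
        have eq1 : (K'' ⧸ LinearMap.range ψK) ≃ₗ[k] (E''.E r m q ⧸ K.map f) :=
          Submodule.Quotient.equiv _ _ (LinearEquiv.ofTop K'' hKtop) hmap
        obtain ⟨eL2⟩ := helper_L2 f hfinj K
        have hcoimr : (E.E r m q ⧸ K) ≃ₗ[k] coimDc E p r m q :=
          Submodule.quotEquivOfEq _ _ (by rw [if_pos hcase])
        -- cokernel of ψ on page r from IH
        obtain ⟨e0, he0⟩ := (IH m q hm).2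
        have gIH : (E''.E r m q ⧸ LinearMap.range f) ≃ₗ[k]
            ((i : (Finset.Ico s r : Finset ℤ)) → coimDc E p i.1 m q) := by
          set π : E''.E r m q →ₗ[k] ((i : (Finset.Ico s r : Finset ℤ)) → coimDc E p i.1 m q) :=
            (LinearMap.snd k (E.E r m q) _).comp e0.toLinearMap with hπdef
          have hπapp : ∀ y, π y = (e0 y).2 := fun y => rfl
          have hπsurj : Function.Surjective π := by
            intro w
            refine ⟨e0.symm (0, w), ?_⟩
            rw [hπapp, e0.apply_symm_apply]
          have hkerπ : LinearMap.range f = LinearMap.ker π := by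
            ext y
            simp only [LinearMap.mem_range, LinearMap.mem_ker]
            constructor
            · rintro ⟨x, rfl⟩
              rw [hπapp, he0]
            · intro hy
              refine ⟨(e0 y).1, e0.injective ?_⟩
              rw [he0]
              exact Prod.ext rfl (by rw [← hπapp, hy])
          exact (Submodule.quotEquivOfEq _ _ hkerπ).trans (π.quotKerEquivOfSurjective hπsurj)
        obtain ⟨epi⟩ := helper_piIcoSucc (k := k) (fun i => coimDc E p i m q) s r hr
        refine ⟨hinj1, helper_L1 _ hinj1 ?_⟩
        exact ecoker.trans (eq1.trans (eL2.trans
          ((hcoimr.prodCongr gIH).trans epi)))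
      · -- easy case: everything in sight is high degree, ψ is bijective on page r+1
        have hfb : Function.Bijective f := hbij m q (by omega)
        have hinjmr : Function.Injective (ψ.φ r (m-r) (q+r-1)) := (IH (m-r) (q+r-1) (by omega)).1
        have hψKsurj : Function.Surjective ψK := by
          rintro ⟨z, hzK⟩
          obtain ⟨x, rfl⟩ := hfb.2 z
          have hxK : x ∈ K := by
            have hz0 : dout'' (f x) = 0 := hzK
            rw [hcomm_out'] at hz0
            show dout x = 0
            apply hinjmr
            rw [hz0, map_zero]
          exact ⟨⟨x, hxK⟩, Subtype.ext rfl⟩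
        haveI : Subsingleton (K'' ⧸ LinearMap.range ψK) :=
          Submodule.Quotient.subsingleton_iff.mpr
            (LinearMap.range_eq_top.mpr hψKsurj)
        haveI : Subsingleton (E''.E (r+1) m q ⧸ LinearMap.range (ψ.φ (r+1) m q)) :=
          Equiv.subsingleton ecoker.toEquiv
        have hsurj1 : Function.Surjective (ψ.φ (r+1) m q) :=
          LinearMap.range_eq_top.mp (Submodule.Quotient.subsingleton_iff.mp this)
        haveI : ∀ i : (Finset.Ico s (r+1) : Finset ℤ), Subsingleton (coimDc E p i.1 m q) := by
          intro i
          have hi := Finset.mem_Ico.mp i.2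
          exact coimSub i.1 m q (by omega)
        exact ⟨hinj1, helper_L3 _ ⟨hinj1, hsurj1⟩⟩
  exact main r hr m q hm
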